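/- For all n ≥ 0, the tally-sequences of the 2^n vertices of the tournament T_n are pairwise distinct. -/

import Mathlib

open scoped Classical

/-- For a nonzero integer `z`, `oddPart z` is `z` divided by the largest power of 2 dividing `z`. -/
def oddPart (z : ℤ) : ℤ := z / 2 ^ (z.natAbs.factorization 2)

/-- The edge relation of the tournament `T n` on vertices `{1, …, 2^n}`
(represented as `Fin (2^n)`, vertex `i` standing for the number `i+1`):
an edge from `i` to `j` iff `odd (j - i) ≡ 1 (mod 4)`. -/
def T (n : ℕ) (i j : Fin (2 ^ n)) : Prop :=
  oddPart (((j : ℕ) : ℤ) - ((i : ℕ) : ℤ)) ≡ 1 [ZMOD 4]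

/-- The tally of `v` relative to the set `Y` in the digraph with edge relation `E`:
the pair (number of edges from `Y` into `v`, number of edges from `v` into `Y`). -/
noncomputable def relTally {V : Type*} [Fintype V] (E : V → V → Prop) (Y : Finset V) (v : V) :
    ℕ × ℕ :=
  ((Y.filter (fun u => E u v)).card, (Y.filter (fun u => E v u)).card)

/-- `tallyVec E k v` is the list `(t_0^v, …, t_k^v)` of the first `k+1` terms of the
tally-sequence of `v`. -/
noncomputable def tallyVec {V : Type*} [Fintype V] (E : V → V → Prop) : ℕ → V → List (ℕ × ℕ)
  | 0, v => [relTally E Finset.univ v]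
  | k + 1, v =>
      tallyVec E k v ++
        [relTally E (Finset.univ.filter (fun u => tallyVec E k u = tallyVec E k v)) v]

/-- `tallyTerm E k v` is the `k`-th term `t_k^v` of the tally-sequence of `v`. -/
noncomputable def tallyTerm {V : Type*} [Fintype V] (E : V → V → Prop) : ℕ → V → ℕ × ℕ
  | 0, v => relTally E Finset.univ v
  | k + 1, v => relTally E (Finset.univ.filter (fun u => tallyVec E k u = tallyVec E k v)) v

/-! ### Auxiliary lemmas about `oddPart` -/

def good (d : ℕ) : Prop := ordCompl[2] d % 4 = 1
def bad (d : ℕ) : Prop := ordCompl[2] d % 4 = 3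

lemma oddPart_natCast (d : ℕ) : oddPart (d : ℤ) = ((ordCompl[2] d : ℕ) : ℤ) := by
  unfold oddPart
  rw [Int.natAbs_natCast]
  push_cast [Int.natCast_ediv]
  ring

lemma oddPart_neg_natCast (d : ℕ) : oddPart (-(d : ℤ)) = -((ordCompl[2] d : ℕ) : ℤ) := by
  unfold oddPart
  rw [Int.natAbs_neg, Int.natAbs_natCast, Int.neg_ediv_of_dvd]
  · push_cast [Int.natCast_ediv]; ring
  · exact_mod_cast Int.natCast_dvd_natCast.mpr (Nat.ordProj_dvd d 2)

lemma modeq_pos (d : ℕ) : (oddPart (d:ℤ) ≡ 1 [ZMOD 4]) ↔ good d := by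
  rw [oddPart_natCast]
  unfold good
  generalize (ordCompl[2] d : ℕ) = m
  unfold Int.ModEq
  omega

lemma modeq_neg (d : ℕ) : (oddPart (-(d:ℤ)) ≡ 1 [ZMOD 4]) ↔ bad d := by
  rw [oddPart_neg_natCast]
  unfold bad
  generalize (ordCompl[2] d : ℕ) = m
  unfold Int.ModEq
  omega

lemma good_or_bad (d : ℕ) (hd : d ≠ 0) : (good d ∧ ¬ bad d) ∨ (bad d ∧ ¬ good d) := by
  have h2 : ¬ 2 ∣ ordCompl[2] d := Nat.not_dvd_ordCompl Nat.prime_two hd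
  unfold good bad
  omega

lemma T_lt {n : ℕ} {u v : Fin (2^n)} (h : (u:ℕ) < (v:ℕ)) :
    T n u v ↔ good ((v:ℕ) - (u:ℕ)) := by
  unfold T
  rw [show ((v:ℕ):ℤ) - ((u:ℕ):ℤ) = (((v:ℕ) - (u:ℕ) : ℕ) : ℤ) by omega]
  exact modeq_pos _

lemma T_gt {n : ℕ} {u v : Fin (2^n)} (h : (v:ℕ) < (u:ℕ)) :
    T n u v ↔ bad ((u:ℕ) - (v:ℕ)) := by
  unfold T
  rw [show ((v:ℕ):ℤ) - ((u:ℕ):ℤ) = -(((u:ℕ) - (v:ℕ) : ℕ) : ℤ) by omega]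
  exact modeq_neg _

lemma T_self {n : ℕ} (v : Fin (2^n)) : ¬ T n v v := by
  unfold T oddPart
  rw [sub_self]
  norm_num

lemma ordCompl_odd {m : ℕ} (h : m % 2 = 1) : ordCompl[2] m = m := by
  rw [Nat.factorization_eq_zero_of_not_dvd (by omega)]
  simp

lemma ordCompl_two_mul {d : ℕ} (hd : d ≠ 0) : ordCompl[2] (2 * d) = ordCompl[2] d := by
  rw [Nat.factorization_mul (by norm_num) hd]
  simp only [Finsupp.coe_add, Pi.add_apply, Nat.Prime.factorization_self Nat.prime_two]
  rw [add_comm 1, pow_succ, ← Nat.div_div_eq_div_mul, Nat.mul_div_assoc 2 (Nat.ordProj_dvd d 2)]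
  omega

lemma good_odd (x : ℕ) : good (2*x+1) ↔ x % 2 = 0 := by
  unfold good; rw [ordCompl_odd (by omega)]; omega
lemma bad_odd (x : ℕ) : bad (2*x+1) ↔ x % 2 = 1 := by
  unfold bad; rw [ordCompl_odd (by omega)]; omega
lemma good_double (d : ℕ) (hd : d ≠ 0) : good (2*d) ↔ good d := by
  unfold good; rw [ordCompl_two_mul hd]
lemma bad_double (d : ℕ) (hd : d ≠ 0) : bad (2*d) ↔ bad d := by
  unfold bad; rw [ordCompl_two_mul hd]
lemma good_one : good 1 := by unfold good; norm_num
lemma not_bad_one : ¬ bad 1 := by unfold bad; norm_num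

/-! ### Counting functions -/

noncomputable def cnt (p : ℕ → Prop) (x : ℕ) : ℕ :=
  ((Finset.range x).filter (fun d => p (d+1))).card

lemma cnt_zero (p : ℕ → Prop) : cnt p 0 = 0 := by simp [cnt]

lemma cnt_succ (p : ℕ → Prop) (x : ℕ) :
    cnt p (x+1) = cnt p x + if p (x+1) then 1 else 0 := by
  unfold cnt
  rw [Finset.range_add_one, Finset.filter_insert]
  split_ifs with h
  · rw [Finset.card_insert_of_notMem (by simp)]
  · rfl

noncomputable def F (x : ℕ) : ℕ := cnt good x
noncomputable def G (x : ℕ) : ℕ := cnt bad x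

lemma F_zero : F 0 = 0 := cnt_zero good
lemma G_zero : G 0 = 0 := cnt_zero bad
lemma F_one : F 1 = 1 := by
  show F (0+1) = 1
  unfold F
  rw [cnt_succ, cnt_zero]
  simp [good_one]
lemma G_one : G 1 = 0 := by
  show G (0+1) = 0
  unfold G
  rw [cnt_succ, cnt_zero]
  simp [not_bad_one]

lemma Frec : ∀ x, F (2*x) = F x + (2*x+3)/4 ∧ F (2*x+1) = F x + (2*x+4)/4 := by
  intro x
  induction x with
  | zero => simp [F_zero, F_one]
  | succ x ih =>
    obtain ⟨ih1, ih2⟩ := ih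
    have h1 : F (2*(x+1)) = F (2*x+1) + if good (2*(x+1)) then 1 else 0 := by
      rw [show 2*(x+1) = (2*x+1)+1 by ring]; exact cnt_succ good _
    have h2 : F (2*(x+1)+1) = F (2*(x+1)) + if good (2*(x+1)+1) then 1 else 0 := cnt_succ good _
    have h3 : F (x+1) = F x + if good (x+1) then 1 else 0 := cnt_succ good x
    have hgd : good (2*(x+1)) ↔ good (x+1) := good_double _ (by omega)
    have hgo : good (2*(x+1)+1) ↔ (x+1) % 2 = 0 := good_odd (x+1)
    by_cases hg : good (x+1) <;> by_cases hp : (x+1) % 2 = 0 <;>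
      simp only [hgd, hgo, hg, hp, if_true, if_false, ite_true, ite_false] at h1 h2 h3 <;>
      constructor <;> omega

lemma Grec : ∀ x, G (2*x) = G x + (2*x+1)/4 ∧ G (2*x+1) = G x + (2*x+2)/4 := by
  intro x
  induction x with
  | zero => simp [G_zero, G_one]
  | succ x ih =>
    obtain ⟨ih1, ih2⟩ := ih
    have h1 : G (2*(x+1)) = G (2*x+1) + if bad (2*(x+1)) then 1 else 0 := by
      rw [show 2*(x+1) = (2*x+1)+1 by ring]; exact cnt_succ bad _
    have h2 : G (2*(x+1)+1) = G (2*(x+1)) + if bad (2*(x+1)+1) then 1 else 0 := cnt_succ bad _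
    have h3 : G (x+1) = G x + if bad (x+1) then 1 else 0 := cnt_succ bad x
    have hgd : bad (2*(x+1)) ↔ bad (x+1) := bad_double _ (by omega)
    have hgo : bad (2*(x+1)+1) ↔ (x+1) % 2 = 1 := bad_odd (x+1)
    by_cases hg : bad (x+1) <;> by_cases hp : (x+1) % 2 = 1 <;>
      simp only [hgd, hgo, hg, hp, if_true, if_false, ite_true, ite_false] at h1 h2 h3 <;>
      constructor <;> omega

lemma claimC : ∀ m, 1 ≤ m → ∀ x y, x + y = 2^m - 1 →
    F x + G y = 2^(m-1) - 1 + (if 2^(m-1) ≤ x then 1 else 0) := by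
  intro m
  induction m with
  | zero => omega
  | succ m ih =>
    intro _ x y hxy
    rcases Nat.eq_zero_or_pos m with hm | hm
    · subst hm
      norm_num at hxy
      have hcase : (x = 0 ∧ y = 1) ∨ (x = 1 ∧ y = 0) := by omega
      rcases hcase with ⟨hx, hy⟩ | ⟨hx, hy⟩ <;> subst hx <;> subst hy <;>
        simp [F_zero, F_one, G_zero, G_one]
    · have hpow : 2^(m+1) = 2 * 2^m := by ring
      have hpow2 : 2^m = 2 * 2^(m-1) := by
        rw [← pow_succ']
        congr 1
        omega
      set c := 2^(m-1) with hc
      have hcpos : 0 < c := Nat.pow_pos (by norm_num)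
      simp only [Nat.add_sub_cancel]
      rcases Nat.even_or_odd x with hx | hx
      · obtain ⟨x', hx'⟩ := hx
        have hxx : x = 2*x' := by omega
        have hyy : y = 2*(y/2)+1 := by omega
        set y' := y/2
        have hsum : x' + y' = 2^m - 1 := by omega
        have hIH := ih hm x' y' hsum
        rw [hxx, hyy, (Frec x').1, (Grec y').2]
        have hiff : (2^m ≤ 2*x') ↔ (c ≤ x') := by omega
        simp only [hiff]
        split_ifs at hIH ⊢ <;> omega
      · obtain ⟨x', hx'⟩ := hx
        have hxx : x = 2*x'+1 := by omega
        have hyy : y = 2*(y/2) := by omega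
        set y' := y/2
        have hsum : x' + y' = 2^m - 1 := by omega
        have hIH := ih hm x' y' hsum
        rw [hxx, hyy, (Frec x').2, (Grec y').1]
        have hiff : (2^m ≤ 2*x'+1) ↔ (c ≤ x') := by omega
        simp only [hiff]
        split_ifs at hIH ⊢ <;> omega

/-! ### Counting edges within a dyadic block -/

lemma count_below {n : ℕ} (p : ℕ → Prop) (a s : ℕ) (v : Fin (2^n)) (hva : a ≤ (v:ℕ))
    (hv : (v:ℕ) < a + 2^s) :
    ((Finset.univ.filter (fun w : Fin (2^n) => a ≤ (w:ℕ) ∧ (w:ℕ) < a + 2^s)).filter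
      (fun (u : Fin (2^n)) => (u:ℕ) < (v:ℕ) ∧ p ((v:ℕ) - (u:ℕ)))).card = cnt p ((v:ℕ) - a) := by
  unfold cnt
  refine Finset.card_nbij' (i := fun (u : Fin (2^n)) => (v:ℕ) - (u:ℕ) - 1)
      (j := fun (d : ℕ) => (⟨(v:ℕ) - (d+1), by have := v.isLt; omega⟩ : Fin (2^n)))
      ?_ ?_ ?_ ?_
  · intro u hu
    simp only [Finset.mem_coe, Finset.mem_filter, Finset.mem_univ, true_and] at hu
    simp only [Finset.mem_coe, Finset.mem_filter, Finset.mem_range]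
    refine ⟨by omega, ?_⟩
    rw [show (v:ℕ) - (u:ℕ) - 1 + 1 = (v:ℕ) - (u:ℕ) by omega]
    exact hu.2.2
  · intro d hd
    simp only [Finset.mem_coe, Finset.mem_filter, Finset.mem_range] at hd
    simp only [Finset.mem_coe, Finset.mem_filter, Finset.mem_univ, true_and]
    show (a ≤ (v:ℕ) - (d+1) ∧ (v:ℕ) - (d+1) < a + 2^s) ∧ (v:ℕ) - (d+1) < (v:ℕ) ∧
      p ((v:ℕ) - ((v:ℕ) - (d+1)))
    refine ⟨⟨by omega, by have := v.isLt; omega⟩, by omega, ?_⟩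
    rw [show (v:ℕ) - ((v:ℕ) - (d+1)) = d + 1 by omega]
    exact hd.2
  · intro u hu
    simp only [Finset.mem_coe, Finset.mem_filter, Finset.mem_univ, true_and] at hu
    apply Fin.ext
    simp only
    omega
  · intro d hd
    simp only [Finset.mem_coe, Finset.mem_filter, Finset.mem_range] at hd
    simp only
    omega

lemma count_above {n : ℕ} (p : ℕ → Prop) (a s : ℕ) (v : Fin (2^n)) (han : a + 2^s ≤ 2^n)
    (hva : a ≤ (v:ℕ)) (hv : (v:ℕ) < a + 2^s) :
    ((Finset.univ.filter (fun w : Fin (2^n) => a ≤ (w:ℕ) ∧ (w:ℕ) < a + 2^s)).filter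
      (fun (u : Fin (2^n)) => (v:ℕ) < (u:ℕ) ∧ p ((u:ℕ) - (v:ℕ)))).card
      = cnt p (a + 2^s - 1 - (v:ℕ)) := by
  unfold cnt
  refine Finset.card_nbij' (i := fun (u : Fin (2^n)) => (u:ℕ) - (v:ℕ) - 1)
      (j := fun (d : ℕ) => (⟨((v:ℕ) + (d+1)) % 2^n,
        Nat.mod_lt _ (Nat.pow_pos (by norm_num))⟩ : Fin (2^n)))
      ?_ ?_ ?_ ?_
  · intro u hu
    simp only [Finset.mem_coe, Finset.mem_filter, Finset.mem_univ, true_and] at hu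
    simp only [Finset.mem_coe, Finset.mem_filter, Finset.mem_range]
    refine ⟨by omega, ?_⟩
    rw [show (u:ℕ) - (v:ℕ) - 1 + 1 = (u:ℕ) - (v:ℕ) by omega]
    exact hu.2.2
  · intro d hd
    simp only [Finset.mem_coe, Finset.mem_filter, Finset.mem_range] at hd
    simp only [Finset.mem_coe, Finset.mem_filter, Finset.mem_univ, true_and]
    have hmod : ((v:ℕ) + (d+1)) % 2^n = (v:ℕ) + (d+1) := Nat.mod_eq_of_lt (by omega)
    show (a ≤ ((v:ℕ) + (d+1)) % 2^n ∧ ((v:ℕ) + (d+1)) % 2^n < a + 2^s) ∧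
      (v:ℕ) < ((v:ℕ) + (d+1)) % 2^n ∧ p (((v:ℕ) + (d+1)) % 2^n - (v:ℕ))
    rw [hmod]
    refine ⟨⟨by omega, by omega⟩, by omega, ?_⟩
    rw [show (v:ℕ) + (d+1) - (v:ℕ) = d + 1 by omega]
    exact hd.2
  · intro u hu
    simp only [Finset.mem_coe, Finset.mem_filter, Finset.mem_univ, true_and] at hu
    apply Fin.ext
    simp only
    have hu2 := u.isLt
    rw [Nat.mod_eq_of_lt (by omega)]
    omega
  · intro d hd
    simp only [Finset.mem_coe, Finset.mem_filter, Finset.mem_range] at hd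
    simp only
    rw [Nat.mod_eq_of_lt (by omega)]
    omega

lemma relTally_block {n s a : ℕ} (hs : 1 ≤ s) (han : a + 2^s ≤ 2^n) (v : Fin (2^n))
    (hva : a ≤ (v:ℕ)) (hv : (v:ℕ) < a + 2^s) :
    relTally (T n) (Finset.univ.filter (fun w : Fin (2^n) => a ≤ (w:ℕ) ∧ (w:ℕ) < a + 2^s)) v =
      (2^(s-1) - 1 + (if a + 2^(s-1) ≤ (v:ℕ) then 1 else 0),
       2^(s-1) - (if a + 2^(s-1) ≤ (v:ℕ) then 1 else 0)) := by
  have hp2 : 2^s = 2*2^(s-1) := by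
    rw [← pow_succ']
    congr 1
    omega
  have hc : 0 < 2^(s-1) := Nat.pow_pos (by norm_num)
  set B := Finset.univ.filter (fun w : Fin (2^n) => a ≤ (w:ℕ) ∧ (w:ℕ) < a + 2^s) with hB
  have hsplit_in : ∀ u : Fin (2^n), T n u v ↔
      (((u:ℕ) < (v:ℕ) ∧ good ((v:ℕ)-(u:ℕ))) ∨ ((v:ℕ) < (u:ℕ) ∧ bad ((u:ℕ)-(v:ℕ)))) := by
    intro u
    rcases lt_trichotomy (u:ℕ) (v:ℕ) with h | h | h
    · rw [T_lt h]
      constructor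
      · intro hg; exact Or.inl ⟨h, hg⟩
      · rintro (⟨_, hg⟩ | ⟨h', _⟩)
        · exact hg
        · omega
    · have : u = v := Fin.ext h
      subst this
      simp only [T_self u, false_iff]
      rintro (⟨h', _⟩ | ⟨h', _⟩) <;> omega
    · rw [T_gt h]
      constructor
      · intro hg; exact Or.inr ⟨h, hg⟩
      · rintro (⟨h', _⟩ | ⟨_, hg⟩)
        · omega
        · exact hg
  have hsplit_out : ∀ u : Fin (2^n), T n v u ↔
      (((u:ℕ) < (v:ℕ) ∧ bad ((v:ℕ)-(u:ℕ))) ∨ ((v:ℕ) < (u:ℕ) ∧ good ((u:ℕ)-(v:ℕ)))) := by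
    intro u
    rcases lt_trichotomy (u:ℕ) (v:ℕ) with h | h | h
    · rw [T_gt h]
      constructor
      · intro hg; exact Or.inl ⟨h, hg⟩
      · rintro (⟨_, hg⟩ | ⟨h', _⟩)
        · exact hg
        · omega
    · have : u = v := Fin.ext h
      subst this
      simp only [T_self u, false_iff]
      rintro (⟨h', _⟩ | ⟨h', _⟩) <;> omega
    · rw [T_lt h]
      constructor
      · intro hg; exact Or.inr ⟨h, hg⟩
      · rintro (⟨h', _⟩ | ⟨_, hg⟩)
        · omega
        · exact hg
  have hdisj : ∀ (p q : ℕ → Prop), Disjoint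
      (B.filter (fun (u : Fin (2^n)) => (u:ℕ) < (v:ℕ) ∧ p ((v:ℕ)-(u:ℕ))))
      (B.filter (fun (u : Fin (2^n)) => (v:ℕ) < (u:ℕ) ∧ q ((u:ℕ)-(v:ℕ)))) := by
    intro p q
    rw [Finset.disjoint_left]
    intro u hu hu'
    simp only [Finset.mem_filter] at hu hu'
    omega
  have hin : (B.filter (fun u => T n u v)).card = F ((v:ℕ) - a) + G (a + 2^s - 1 - (v:ℕ)) := by
    have h1 : B.filter (fun u => T n u v) =
        (B.filter (fun (u : Fin (2^n)) => (u:ℕ) < (v:ℕ) ∧ good ((v:ℕ)-(u:ℕ)))) ∪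
        (B.filter (fun (u : Fin (2^n)) => (v:ℕ) < (u:ℕ) ∧ bad ((u:ℕ)-(v:ℕ)))) := by
      rw [← Finset.filter_or]
      apply Finset.filter_congr
      intro u _
      exact hsplit_in u
    rw [h1, Finset.card_union_of_disjoint (hdisj _ _), hB,
      count_below good a s v hva hv, count_above bad a s v han hva hv]
    rfl
  have hout : (B.filter (fun u => T n v u)).card = G ((v:ℕ) - a) + F (a + 2^s - 1 - (v:ℕ)) := by
    have h1 : B.filter (fun u => T n v u) =
        (B.filter (fun (u : Fin (2^n)) => (u:ℕ) < (v:ℕ) ∧ bad ((v:ℕ)-(u:ℕ)))) ∪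
        (B.filter (fun (u : Fin (2^n)) => (v:ℕ) < (u:ℕ) ∧ good ((u:ℕ)-(v:ℕ)))) := by
      rw [← Finset.filter_or]
      apply Finset.filter_congr
      intro u _
      exact hsplit_out u
    rw [h1, Finset.card_union_of_disjoint (hdisj _ _), hB,
      count_below bad a s v hva hv, count_above good a s v han hva hv]
    rfl
  have hC1 := claimC s hs ((v:ℕ) - a) (a + 2^s - 1 - (v:ℕ)) (by omega)
  have hC2 := claimC s hs (a + 2^s - 1 - (v:ℕ)) ((v:ℕ) - a) (by omega)
  unfold relTally
  rw [hin, hout, Prod.mk.injEq]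
  constructor
  · rw [hC1]
    have : (2^(s-1) ≤ (v:ℕ) - a) ↔ (a + 2^(s-1) ≤ (v:ℕ)) := by omega
    simp only [this]
  · have : (2^(s-1) ≤ a + 2^s - 1 - (v:ℕ)) ↔ ¬(a + 2^(s-1) ≤ (v:ℕ)) := by omega
    rw [Nat.add_comm, hC2]
    simp only [this]
    split_ifs <;> omega

/-! ### Division helper lemmas -/

lemma halfsplit {c q u a : ℕ} (hc : 0 < c) (ha : a = 2*c*q) (h1 : a ≤ u) (h2 : u < a + 2*c) :
    u / c = 2*q + (if a + c ≤ u then 1 else 0) := by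
  have key : ∀ r, (a + r)/c = 2*q + r/c := by
    intro r
    rw [ha, show 2*c*q + r = c*(2*q)+r by ring, Nat.mul_add_div hc]
  have hu : u = a + (u - a) := by omega
  rw [hu, key (u - a)]
  rcases le_or_gt (a + c) u with h | h
  · rw [if_pos (by omega)]
    congr 1
    have e1 : 1*c ≤ u - a := by omega
    have e2 : u - a < (1+1)*c := by omega
    rw [Nat.div_eq_of_lt_le e1 e2]
  · rw [if_neg (by omega), Nat.div_eq_of_lt (by omega)]

lemma div_block {c x w : ℕ} (hc : 0 < c) :
    x / c = w / c ↔ ((w/c)*c ≤ x ∧ x < (w/c)*c + c) := by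
  constructor
  · intro h
    constructor
    · rw [← h]; exact Nat.div_mul_le_self x c
    · rw [← h]; exact Nat.lt_div_mul_add hc
  · rintro ⟨h1, h2⟩
    rw [Nat.div_eq_of_lt_le h1 (by rw [add_mul, one_mul]; exact h2)]

/-! ### Structure of tally vectors -/

lemma tallyVec_succ {V : Type*} [Fintype V] (E : V → V → Prop) (k : ℕ) (v : V) :
    tallyVec E (k+1) v = tallyVec E k v ++ [tallyTerm E (k+1) v] := rfl

lemma tallyVec_length {V : Type*} [Fintype V] (E : V → V → Prop) (k : ℕ) (v : V) :
    (tallyVec E k v).length = k + 1 := by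
  induction k with
  | zero => rfl
  | succ k ih => rw [tallyVec_succ, List.length_append, ih]; rfl

lemma tallyVec_eq_of_term {V : Type*} [Fintype V] (E : V → V → Prop) {u v : V}
    (h : ∀ k : ℕ, tallyTerm E k u = tallyTerm E k v) (k : ℕ) :
    tallyVec E k u = tallyVec E k v := by
  induction k with
  | zero =>
    show [tallyTerm E 0 u] = [tallyTerm E 0 v]
    rw [h 0]
  | succ k ih =>
    rw [tallyVec_succ, tallyVec_succ, ih, h (k+1)]

/-! ### The main induction -/

lemma main_lemma (n : ℕ) : ∀ k, k + 1 ≤ n → ∀ u v : Fin (2^n),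
    (tallyVec (T n) k u = tallyVec (T n) k v ↔
      (u:ℕ) / 2^(n-(k+1)) = (v:ℕ) / 2^(n-(k+1))) := by
  intro k
  induction k with
  | zero =>
    intro hn u v
    have hp2 : 2^n = 2*2^(n-1) := by
      rw [← pow_succ']
      congr 1
      omega
    have hc : 0 < 2^(n-1) := Nat.pow_pos (by norm_num)
    have huniv : (Finset.univ : Finset (Fin (2^n))) =
        Finset.univ.filter (fun w : Fin (2^n) => 0 ≤ (w:ℕ) ∧ (w:ℕ) < 0 + 2^n) := by
      ext w
      simp [w.isLt]
    have hru := relTally_block (a := 0) (s := n) hn (by omega) u (by omega)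
      (by simpa using u.isLt)
    have hrv := relTally_block (a := 0) (s := n) hn (by omega) v (by omega)
      (by simpa using v.isLt)
    have hhu := halfsplit (q := 0) (a := 0) hc (by ring) (Nat.zero_le _)
      (by rw [zero_add, ← hp2]; exact u.isLt)
    have hhv := halfsplit (q := 0) (a := 0) hc (by ring) (Nat.zero_le _)
      (by rw [zero_add, ← hp2]; exact v.isLt)
    rw [zero_add] at hhu hhv
    show ([relTally (T n) Finset.univ u] = [relTally (T n) Finset.univ v]) ↔ _
    rw [huniv, hru, hrv]
    simp only [Nat.sub_zero, List.cons.injEq, and_true, Prod.mk.injEq]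
    rw [show n - (0+1) = n - 1 by omega, hhu, hhv]
    split_ifs <;> omega
  | succ k ih =>
    intro hn u v
    have hk1 : k + 1 ≤ n := by omega
    have ihuv := ih hk1
    set s := n - (k+1) with hsdef
    have hs1 : 1 ≤ s := by omega
    have hp2 : 2^s = 2*2^(s-1) := by
      rw [← pow_succ']
      congr 1
      omega
    have hcs : 0 < 2^s := Nat.pow_pos (by norm_num)
    have hc : 0 < 2^(s-1) := Nat.pow_pos (by norm_num)
    have h2n : 2^n = 2^(n-s)*2^s := by
      rw [← pow_add]
      congr 1
      omega
    -- the class of w is the dyadic block of size 2^s containing w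
    have hY : ∀ w : Fin (2^n),
        Finset.univ.filter (fun x => tallyVec (T n) k x = tallyVec (T n) k w) =
        Finset.univ.filter (fun x : Fin (2^n) =>
          ((w:ℕ)/2^s)*2^s ≤ (x:ℕ) ∧ (x:ℕ) < ((w:ℕ)/2^s)*2^s + 2^s) := by
      intro w
      apply Finset.filter_congr
      intro x _
      rw [ihuv x w]
      exact div_block hcs
    have hblock : ∀ w : Fin (2^n), ((w:ℕ)/2^s)*2^s + 2^s ≤ 2^n := by
      intro w
      have hlt : (w:ℕ)/2^s < 2^(n-s) := by
        rw [Nat.div_lt_iff_lt_mul hcs, ← h2n]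
        exact w.isLt
      calc ((w:ℕ)/2^s)*2^s + 2^s = ((w:ℕ)/2^s + 1)*2^s := by ring
        _ ≤ 2^(n-s)*2^s := Nat.mul_le_mul_right _ hlt
        _ = 2^n := h2n.symm
    have hva : ∀ w : Fin (2^n), ((w:ℕ)/2^s)*2^s ≤ (w:ℕ) := fun w => Nat.div_mul_le_self _ _
    have hvb : ∀ w : Fin (2^n), (w:ℕ) < ((w:ℕ)/2^s)*2^s + 2^s := fun w => Nat.lt_div_mul_add hcs
    have hrel : ∀ w : Fin (2^n),
        relTally (T n) (Finset.univ.filter (fun x =>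
          tallyVec (T n) k x = tallyVec (T n) k w)) w =
        (2^(s-1) - 1 + (if ((w:ℕ)/2^s)*2^s + 2^(s-1) ≤ (w:ℕ) then 1 else 0),
         2^(s-1) - (if ((w:ℕ)/2^s)*2^s + 2^(s-1) ≤ (w:ℕ) then 1 else 0)) := by
      intro w
      rw [hY w]
      exact relTally_block hs1 (hblock w) w (hva w) (hvb w)
    have hhalf : ∀ w : Fin (2^n), (w:ℕ) / 2^(s-1) =
        2*((w:ℕ)/2^s) + (if ((w:ℕ)/2^s)*2^s + 2^(s-1) ≤ (w:ℕ) then 1 else 0) := by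
      intro w
      exact halfsplit hc (by rw [hp2]; ring) (hva w) (by rw [← hp2]; exact hvb w)
    have hexp : n - (k+1+1) = s - 1 := by omega
    rw [hexp]
    constructor
    · intro heq
      rw [tallyVec_succ, tallyVec_succ] at heq
      obtain ⟨h1, h2⟩ := List.append_inj heq (by rw [tallyVec_length, tallyVec_length])
      have hdiv : (u:ℕ)/2^s = (v:ℕ)/2^s := (ihuv u v).mp h1
      have h2' : tallyTerm (T n) (k+1) u = tallyTerm (T n) (k+1) v := by
        have := List.head_eq_of_cons_eq h2
        exact this
      have hrtu := hrel u
      have hrtv := hrel v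
      have h2'' : relTally (T n) (Finset.univ.filter (fun x =>
            tallyVec (T n) k x = tallyVec (T n) k u)) u =
          relTally (T n) (Finset.univ.filter (fun x =>
            tallyVec (T n) k x = tallyVec (T n) k v)) v := h2'
      rw [hrtu, hrtv, Prod.mk.injEq] at h2''
      rw [hhalf u, hhalf v, hdiv]
      rw [hdiv] at h2''
      split_ifs at h2'' ⊢ <;> omega
    · intro hdiv1
      have hdiv : (u:ℕ)/2^s = (v:ℕ)/2^s := by
        rw [show (2:ℕ)^s = 2^(s-1)*2 by rw [hp2]; ring, ← Nat.div_div_eq_div_mul,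
          ← Nat.div_div_eq_div_mul, hdiv1]
      have h1 : tallyVec (T n) k u = tallyVec (T n) k v := (ihuv u v).mpr hdiv
      show tallyVec (T n) k u ++ [relTally (T n) (Finset.univ.filter (fun x =>
            tallyVec (T n) k x = tallyVec (T n) k u)) u] =
        tallyVec (T n) k v ++ [relTally (T n) (Finset.univ.filter (fun x =>
            tallyVec (T n) k x = tallyVec (T n) k v)) v]
      rw [hrel u, hrel v, h1]
      have hu2 := hhalf u
      have hv2 := hhalf v
      rw [hdiv] at hu2
      simp only [List.append_cancel_left_eq, List.cons.injEq, and_true, Prod.mk.injEq, hdiv]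
      split_ifs at hu2 hv2 ⊢ <;> omega

/-- The tally-sequences of the vertices of the tournament `T n` are pairwise distinct. -/
theorem stmt_10 (n : ℕ) (u v : Fin (2 ^ n))
    (h : ∀ k : ℕ, tallyTerm (T n) k u = tallyTerm (T n) k v) : u = v := by
  rcases Nat.eq_zero_or_pos n with hn | hn
  · subst hn
    apply Fin.ext
    have hu := u.isLt
    have hv := v.isLt
    norm_num at hu hv
    omega
  · have hvec := tallyVec_eq_of_term (T n) h (n-1)
    have := (main_lemma n (n-1) (by omega) u v).mp hvec
    rw [show n - (n-1+1) = 0 by omega] at this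
    apply Fin.ext
    simpa using this
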